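/- Let l_1,...,l_m be independent indices with P(l_k = i) = r_{k,i} and ∑_{k=1}^m r_{k,i} = m p_i for all i. For any z_1,...,z_n, g_1,...,g_n ∈ ℝ^d with g = ∑_i p_i g_i satisfying ∑_i p_i ‖g_i‖² ≤ β²‖g‖² + κ², one has E[‖(1/m)∑_{k=1}^m z_{l_k}‖²] ≤ 3∑_{i=1}^n p_i ‖z_i − g_i‖² + 3‖g‖² + (3/m)(β²‖g‖² + κ²). -/

import Mathlib

open Finset

lemma sum_prod_pi {m n : ℕ} (F : Fin m → Fin n → ℝ) :
    ∑ l : Fin m → Fin n, ∏ k, F k (l k) = ∏ k, ∑ i, F k i := by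
  rw [Finset.prod_univ_sum, Fintype.piFinset_univ]

lemma marg1 {m n : ℕ} (r : Fin m → Fin n → ℝ) (hr1 : ∀ k, ∑ i, r k i = 1)
    (k₀ : Fin m) (φ : Fin n → ℝ) :
    ∑ l : Fin m → Fin n, (∏ k, r k (l k)) * φ (l k₀) = ∑ i, r k₀ i * φ i := by
  have h : ∀ l : Fin m → Fin n, (∏ k, r k (l k)) * φ (l k₀)
      = ∏ k, (r k (l k) * if k = k₀ then φ (l k) else 1) := by
    intro l
    rw [Finset.prod_mul_distrib, Finset.prod_ite_eq' univ k₀ (fun k => φ (l k))]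
    simp
  simp_rw [h]
  rw [sum_prod_pi (fun k i => r k i * if k = k₀ then φ i else 1)]
  have h2 : ∀ k : Fin m, (∑ i, r k i * if k = k₀ then φ i else 1)
      = if k = k₀ then ∑ i, r k i * φ i else 1 := by
    intro k
    by_cases hk : k = k₀ <;> simp [hk, hr1]
  simp_rw [h2]
  rw [Finset.prod_ite_eq' univ k₀ (fun k => ∑ i, r k i * φ i)]
  simp

lemma marg2 {m n : ℕ} (r : Fin m → Fin n → ℝ) (hr1 : ∀ k, ∑ i, r k i = 1)
    (k₁ k₂ : Fin m) (hk : k₁ ≠ k₂) (φ ψ : Fin n → ℝ) :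
    ∑ l : Fin m → Fin n, (∏ k, r k (l k)) * (φ (l k₁) * ψ (l k₂))
      = (∑ i, r k₁ i * φ i) * (∑ i, r k₂ i * ψ i) := by
  have h : ∀ l : Fin m → Fin n, (∏ k, r k (l k)) * (φ (l k₁) * ψ (l k₂))
      = ∏ k, (r k (l k) * ((if k = k₁ then φ (l k) else 1) * (if k = k₂ then ψ (l k) else 1))) := by
    intro l
    rw [Finset.prod_mul_distrib, Finset.prod_mul_distrib,
      Finset.prod_ite_eq' univ k₁ (fun k => φ (l k)),
      Finset.prod_ite_eq' univ k₂ (fun k => ψ (l k))]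
    simp
  simp_rw [h]
  rw [sum_prod_pi (fun k i => r k i * ((if k = k₁ then φ i else 1) * if k = k₂ then ψ i else 1))]
  have h2 : ∀ k : Fin m,
      (∑ i, r k i * ((if k = k₁ then φ i else 1) * (if k = k₂ then ψ i else 1)))
      = (if k = k₁ then ∑ i, r k₁ i * φ i else 1) * (if k = k₂ then ∑ i, r k₂ i * ψ i else 1) := by
    intro k
    by_cases h1 : k = k₁
    · subst h1; simp [hk, hr1]
    · by_cases h2 : k = k₂ <;> simp [h1, h2, hr1, Ne.symm hk]
  simp_rw [h2]
  rw [Finset.prod_mul_distrib,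
    Finset.prod_ite_eq' univ k₁ (fun _ => ∑ i, r k₁ i * φ i),
    Finset.prod_ite_eq' univ k₂ (fun _ => ∑ i, r k₂ i * ψ i)]
  simp

lemma centered_sq {m n : ℕ} (r : Fin m → Fin n → ℝ) (hr1 : ∀ k, ∑ i, r k i = 1)
    (a : Fin m → Fin n → ℝ) (ha : ∀ k, ∑ i, r k i * a k i = 0) :
    ∑ l : Fin m → Fin n, (∏ k, r k (l k)) * (∑ k, a k (l k)) ^ 2
      = ∑ k, ∑ i, r k i * (a k i) ^ 2 := by
  have hexp : ∀ l : Fin m → Fin n, (∏ k, r k (l k)) * (∑ k, a k (l k)) ^ 2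
      = ∑ k₁, ∑ k₂, (∏ k, r k (l k)) * (a k₁ (l k₁) * a k₂ (l k₂)) := by
    intro l
    rw [sq, Finset.sum_mul_sum, Finset.mul_sum]
    exact Finset.sum_congr rfl fun k₁ _ => by rw [Finset.mul_sum]
  simp_rw [hexp]
  rw [Finset.sum_comm]
  have key : ∀ k₁ : Fin m,
      ∑ l : Fin m → Fin n, ∑ k₂, (∏ k, r k (l k)) * (a k₁ (l k₁) * a k₂ (l k₂))
      = ∑ i, r k₁ i * a k₁ i ^ 2 := by
    intro k₁
    rw [Finset.sum_comm]
    rw [Finset.sum_eq_single k₁]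
    · rw [marg1 r hr1 k₁ (fun i => a k₁ i * a k₁ i)]
      simp [sq]
    · intro k₂ _ hne
      rw [marg2 r hr1 k₁ k₂ (Ne.symm hne) (a k₁) (a k₂), ha, ha, mul_zero]
    · intro h; exact absurd (Finset.mem_univ k₁) h
  simp_rw [key]

set_option maxHeartbeats 1000000 in
/-- Lemma 1 for unbiased clustered sampling: second-moment bound on the aggregated
update when the m indices are drawn independently from cluster distributions `r k`
with `∑_k r k i = m p i`. -/
theorem clustered_sampling_second_moment (n m d : ℕ) (hm : 0 < m)
    (p : Fin n → ℝ) (hp0 : ∀ i, 0 ≤ p i) (hp1 : ∑ i, p i = 1)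
    (r : Fin m → Fin n → ℝ)
    (hr0 : ∀ k i, 0 ≤ r k i) (hr1 : ∀ k, ∑ i, r k i = 1)
    (hunb : ∀ i, ∑ k, r k i = m * p i)
    (z g : Fin n → EuclideanSpace ℝ (Fin d))
    (gbar : EuclideanSpace ℝ (Fin d)) (hgbar : gbar = ∑ i, p i • g i)
    (β κ : ℝ) (hβ : 1 ≤ β ^ 2) (hκ : 0 ≤ κ)
    (hdiss : ∑ i, p i * ‖g i‖ ^ 2 ≤ β ^ 2 * ‖gbar‖ ^ 2 + κ ^ 2) :
    ∑ l : Fin m → Fin n, (∏ k, r k (l k)) * ‖(1 / (m : ℝ)) • ∑ k, z (l k)‖ ^ 2 ≤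
      3 * (∑ i, p i * ‖z i - g i‖ ^ 2) + 3 * ‖gbar‖ ^ 2 +
        (3 / (m : ℝ)) * (β ^ 2 * ‖gbar‖ ^ 2 + κ ^ 2) := by
  have hm' : (m : ℝ) ≠ 0 := Nat.cast_ne_zero.mpr hm.ne'
  have hmpos : (0:ℝ) < m := Nat.cast_pos.mpr hm
  set μ : (Fin m → Fin n) → ℝ := fun l => ∏ k, r k (l k) with hμdef
  have hμ0 : ∀ l, 0 ≤ μ l := fun l => Finset.prod_nonneg fun k _ => hr0 k (l k)
  have hμ1 : ∑ l, μ l = 1 := by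
    rw [hμdef, sum_prod_pi r]
    simp [hr1]
  set gm : Fin m → EuclideanSpace ℝ (Fin d) := fun k => ∑ i, r k i • g i with hgmdef
  -- components of sums
  have happ : ∀ {γ : Type} (s : Finset γ) (f : γ → EuclideanSpace ℝ (Fin d)) (t : Fin d),
      (∑ j ∈ s, f j) t = ∑ j ∈ s, f j t := by
    intro γ s f t
    exact map_sum (EuclideanSpace.proj t) f s
  have hns : ∀ x : EuclideanSpace ℝ (Fin d), ‖x‖ ^ 2 = ∑ t, (x t) ^ 2 := by
    intro x
    rw [EuclideanSpace.norm_eq, Real.sq_sqrt (by positivity)]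
    simp [Real.norm_eq_abs, sq_abs]
  have hgmapp : ∀ (k : Fin m) (t : Fin d), gm k t = ∑ i, r k i * g i t := by
    intro k t
    have h0 : gm k = ∑ i, r k i • g i := rfl
    rw [h0, happ]
    exact Finset.sum_congr rfl fun i _ => by rw [PiLp.smul_apply, smul_eq_mul]
  -- mean of gm is gbar
  have hgsum : (1 / (m:ℝ)) • ∑ k, gm k = gbar := by
    rw [hgmdef, Finset.sum_comm]
    have h1 : ∀ i : Fin n, ∑ k : Fin m, r k i • g i = ((m:ℝ) * p i) • g i := by
      intro i
      rw [← Finset.sum_smul, hunb i]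
    simp_rw [h1, mul_smul, ← Finset.smul_sum, smul_smul]
    rw [hgbar, one_div, inv_mul_cancel₀ hm', one_smul]
  -- pointwise decomposition bound
  have hpt : ∀ l : Fin m → Fin n,
      ‖(1 / (m : ℝ)) • ∑ k, z (l k)‖ ^ 2 ≤
        3 * ((1 / (m:ℝ)) * ∑ k, ‖z (l k) - g (l k)‖ ^ 2)
        + 3 * ((1 / (m:ℝ)) ^ 2 * ∑ t, (∑ k, (g (l k) t - gm k t)) ^ 2)
        + 3 * ‖gbar‖ ^ 2 := by
    intro l
    have heq : (1 / (m : ℝ)) • ∑ k, z (l k)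
        = (1 / (m:ℝ)) • (∑ k, (z (l k) - g (l k)))
          + (1 / (m:ℝ)) • (∑ k, (g (l k) - gm k)) + gbar := by
      rw [← hgsum, ← smul_add, ← smul_add]
      congr 1
      rw [← Finset.sum_add_distrib, ← Finset.sum_add_distrib]
      exact Finset.sum_congr rfl fun k _ => by abel
    set A := (1 / (m:ℝ)) • (∑ k, (z (l k) - g (l k))) with hA
    set B := (1 / (m:ℝ)) • (∑ k, (g (l k) - gm k)) with hB
    have htri : ‖(1 / (m : ℝ)) • ∑ k, z (l k)‖ ≤ ‖A‖ + ‖B‖ + ‖gbar‖ := by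
      rw [heq]; exact norm_add₃_le
    have hAbound : ‖A‖ ^ 2 ≤ (1 / (m:ℝ)) * ∑ k, ‖z (l k) - g (l k)‖ ^ 2 := by
      rw [hA, norm_smul, mul_pow]
      have h1 : ‖∑ k, (z (l k) - g (l k))‖ ^ 2 ≤ (m:ℝ) * ∑ k, ‖z (l k) - g (l k)‖ ^ 2 := by
        calc ‖∑ k, (z (l k) - g (l k))‖ ^ 2 ≤ (∑ k, ‖z (l k) - g (l k)‖) ^ 2 := by
              apply pow_le_pow_left₀ (norm_nonneg _) (norm_sum_le _ _)
          _ ≤ (m:ℝ) * ∑ k, ‖z (l k) - g (l k)‖ ^ 2 := by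
              simpa using sq_sum_le_card_mul_sum_sq (s := (univ : Finset (Fin m)))
                (f := fun k => ‖z (l k) - g (l k)‖)
      have h2 : ‖(1 / (m:ℝ))‖ ^ 2 = (1 / (m:ℝ)) ^ 2 := by
        rw [Real.norm_eq_abs, sq_abs]
      rw [h2]
      calc (1 / (m:ℝ)) ^ 2 * ‖∑ k, (z (l k) - g (l k))‖ ^ 2
          ≤ (1 / (m:ℝ)) ^ 2 * ((m:ℝ) * ∑ k, ‖z (l k) - g (l k)‖ ^ 2) := by
            apply mul_le_mul_of_nonneg_left h1 (by positivity)
        _ = (1 / (m:ℝ)) * ∑ k, ‖z (l k) - g (l k)‖ ^ 2 := by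
            field_simp
    have hBeq : ‖B‖ ^ 2 = (1 / (m:ℝ)) ^ 2 * ∑ t, (∑ k, (g (l k) t - gm k t)) ^ 2 := by
      rw [hB, norm_smul, mul_pow, Real.norm_eq_abs, sq_abs]
      congr 1
      rw [hns]
      apply Finset.sum_congr rfl
      intro t _
      congr 1
      rw [happ]
      exact Finset.sum_congr rfl fun k _ => by rw [PiLp.sub_apply]
    nlinarith [norm_nonneg A, norm_nonneg B, norm_nonneg gbar,
      norm_nonneg ((1 / (m : ℝ)) • ∑ k, z (l k)), sq_nonneg (‖A‖ - ‖B‖),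
      sq_nonneg (‖A‖ - ‖gbar‖), sq_nonneg (‖B‖ - ‖gbar‖)]
  -- expectation of first term
  have hT1 : ∑ l, μ l * ((1 / (m:ℝ)) * ∑ k, ‖z (l k) - g (l k)‖ ^ 2)
      = ∑ i, p i * ‖z i - g i‖ ^ 2 := by
    have step : ∀ l, μ l * ((1 / (m:ℝ)) * ∑ k, ‖z (l k) - g (l k)‖ ^ 2)
        = (1 / (m:ℝ)) * ∑ k, μ l * ‖z (l k) - g (l k)‖ ^ 2 := by
      intro l
      rw [Finset.mul_sum, Finset.mul_sum, Finset.mul_sum]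
      exact Finset.sum_congr rfl fun k _ => by ring
    simp_rw [step]
    rw [← Finset.mul_sum, Finset.sum_comm]
    have hmarg : ∀ k : Fin m, ∑ l : Fin m → Fin n, μ l * ‖z (l k) - g (l k)‖ ^ 2
        = ∑ i, r k i * ‖z i - g i‖ ^ 2 :=
      fun k => marg1 r hr1 k (fun i => ‖z i - g i‖ ^ 2)
    simp_rw [hmarg]
    rw [Finset.sum_comm]
    have h2 : ∀ i : Fin n, ∑ k : Fin m, r k i * ‖z i - g i‖ ^ 2
        = (m:ℝ) * (p i * ‖z i - g i‖ ^ 2) := by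
      intro i
      rw [← Finset.sum_mul, hunb i, mul_assoc]
    simp_rw [h2]
    rw [← Finset.mul_sum]
    field_simp
  -- expectation of second term
  have hT2 : ∑ l, μ l * ((1 / (m:ℝ)) ^ 2 * ∑ t, (∑ k, (g (l k) t - gm k t)) ^ 2)
      ≤ (1 / (m:ℝ)) * (β ^ 2 * ‖gbar‖ ^ 2 + κ ^ 2) := by
    have key : ∀ t : Fin d, ∑ l : Fin m → Fin n, μ l * (∑ k, (g (l k) t - gm k t)) ^ 2
        = ∑ k, ∑ i, r k i * (g i t - gm k t) ^ 2 := by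
      intro t
      refine centered_sq r hr1 (fun k i => g i t - gm k t) (fun k => ?_)
      simp only [mul_sub]
      rw [Finset.sum_sub_distrib, ← hgmapp k t, ← Finset.sum_mul, hr1, one_mul, sub_self]
    have hre : ∑ l, μ l * ((1 / (m:ℝ)) ^ 2 * ∑ t, (∑ k, (g (l k) t - gm k t)) ^ 2)
        = (1 / (m:ℝ)) ^ 2 * ∑ t, ∑ l, μ l * (∑ k, (g (l k) t - gm k t)) ^ 2 := by
      simp only [Finset.mul_sum]
      rw [Finset.sum_comm]
      exact Finset.sum_congr rfl fun t _ => Finset.sum_congr rfl fun l _ => by ring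
    rw [hre]
    simp_rw [key]
    have hswap : ∑ t, ∑ k, ∑ i, r k i * (g i t - gm k t) ^ 2
        = ∑ k, ∑ i, r k i * ‖g i - gm k‖ ^ 2 := by
      rw [Finset.sum_comm]
      refine Finset.sum_congr rfl fun k _ => ?_
      rw [Finset.sum_comm]
      refine Finset.sum_congr rfl fun i _ => ?_
      rw [← Finset.mul_sum]
      congr 1
      rw [hns (g i - gm k)]
      exact (Finset.sum_congr rfl fun t _ => by rw [PiLp.sub_apply]).symm
    rw [hswap]
    have hvar : ∀ k, ∑ i, r k i * ‖g i - gm k‖ ^ 2 ≤ ∑ i, r k i * ‖g i‖ ^ 2 := by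
      intro k
      have hinner : ∑ i, r k i * (inner ℝ (g i) (gm k) : ℝ) = ‖gm k‖ ^ 2 := by
        have h1 := sum_inner (𝕜 := ℝ) univ (fun i => r k i • g i) (gm k)
        have h2 : ∑ i, r k i • g i = gm k := rfl
        rw [h2] at h1
        simp_rw [real_inner_smul_left] at h1
        rw [← h1, real_inner_self_eq_norm_sq]
      have hcalc : ∑ i, r k i * ‖g i - gm k‖ ^ 2
          = ∑ i, r k i * ‖g i‖ ^ 2 - ‖gm k‖ ^ 2 := by
        have hterm : ∀ i, r k i * ‖g i - gm k‖ ^ 2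
            = r k i * ‖g i‖ ^ 2 - 2 * (r k i * (inner ℝ (g i) (gm k) : ℝ))
              + r k i * ‖gm k‖ ^ 2 := by
          intro i
          rw [norm_sub_sq_real]
          ring
        simp_rw [hterm]
        rw [Finset.sum_add_distrib, Finset.sum_sub_distrib, ← Finset.mul_sum, hinner,
          ← Finset.sum_mul, hr1, one_mul]
        ring
      rw [hcalc]
      nlinarith [sq_nonneg ‖gm k‖]
    calc (1 / (m:ℝ)) ^ 2 * ∑ k, ∑ i, r k i * ‖g i - gm k‖ ^ 2
        ≤ (1 / (m:ℝ)) ^ 2 * ∑ k, ∑ i, r k i * ‖g i‖ ^ 2 := by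
          apply mul_le_mul_of_nonneg_left (Finset.sum_le_sum fun k _ => hvar k) (by positivity)
      _ = (1 / (m:ℝ)) * ∑ i, p i * ‖g i‖ ^ 2 := by
          rw [Finset.sum_comm]
          have h2 : ∀ i : Fin n, ∑ k : Fin m, r k i * ‖g i‖ ^ 2
              = (m:ℝ) * (p i * ‖g i‖ ^ 2) := by
            intro i
            rw [← Finset.sum_mul, hunb i, mul_assoc]
          simp_rw [h2]
          rw [← Finset.mul_sum]
          field_simp
      _ ≤ (1 / (m:ℝ)) * (β ^ 2 * ‖gbar‖ ^ 2 + κ ^ 2) := by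
          apply mul_le_mul_of_nonneg_left hdiss (by positivity)
  -- assemble
  calc ∑ l : Fin m → Fin n, μ l * ‖(1 / (m : ℝ)) • ∑ k, z (l k)‖ ^ 2
      ≤ ∑ l : Fin m → Fin n, μ l *
          (3 * ((1 / (m:ℝ)) * ∑ k, ‖z (l k) - g (l k)‖ ^ 2)
          + 3 * ((1 / (m:ℝ)) ^ 2 * ∑ t, (∑ k, (g (l k) t - gm k t)) ^ 2)
          + 3 * ‖gbar‖ ^ 2) :=
        Finset.sum_le_sum fun l _ => mul_le_mul_of_nonneg_left (hpt l) (hμ0 l)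
    _ = 3 * (∑ l, μ l * ((1 / (m:ℝ)) * ∑ k, ‖z (l k) - g (l k)‖ ^ 2))
        + 3 * (∑ l, μ l * ((1 / (m:ℝ)) ^ 2 * ∑ t, (∑ k, (g (l k) t - gm k t)) ^ 2))
        + 3 * ‖gbar‖ ^ 2 * (∑ l, μ l) := by
        rw [Finset.mul_sum, Finset.mul_sum, Finset.mul_sum, ← Finset.sum_add_distrib,
          ← Finset.sum_add_distrib]
        exact Finset.sum_congr rfl fun l _ => by ring
    _ ≤ 3 * (∑ i, p i * ‖z i - g i‖ ^ 2)
        + 3 * ((1 / (m:ℝ)) * (β ^ 2 * ‖gbar‖ ^ 2 + κ ^ 2)) + 3 * ‖gbar‖ ^ 2 * 1 := by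
        rw [hT1, hμ1]
        linarith [hT2]
    _ = 3 * (∑ i, p i * ‖z i - g i‖ ^ 2) + 3 * ‖gbar‖ ^ 2 +
        (3 / (m : ℝ)) * (β ^ 2 * ‖gbar‖ ^ 2 + κ ^ 2) := by
        ring
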